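/- Let λ₁, λ₂, …, λₙ be complex numbers such that λ₁ is real, λ₁ + ⋯ + λₙ ≥ 0 (as a real number), the multiset {λ₁, …, λₙ} is closed under complex conjugation, and for i = 2, …, n one has Re λᵢ ≤ 0 and |Re λᵢ| ≥ |Im λᵢ|. Then the list is realizable: there exists an n×n entrywise nonnegative real matrix with constant row sums λ₁ whose characteristic polynomial, viewed over ℂ, equals ∏ᵢ₌₁ⁿ (X − λᵢ). -/

import Mathlib

open Polynomial Matrix

namespace SulAux


lemma coeff_lin_mul_succ (p : ℝ) (Q : ℝ[X]) (k : ℕ) :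
    ((X + C p) * Q).coeff (k+1) = Q.coeff k + p * Q.coeff (k+1) := by
  rw [add_mul, coeff_add, coeff_X_mul, coeff_C_mul]

lemma coeff_lin_mul_zero (p : ℝ) (Q : ℝ[X]) :
    ((X + C p) * Q).coeff 0 = p * Q.coeff 0 := by
  rw [mul_coeff_zero, coeff_add, coeff_X_zero, coeff_C_zero, zero_add]

lemma coeff_quad_mul_succ (b c : ℝ) (Q : ℝ[X]) (k : ℕ) :
    ((X^2 + C b * X + C c) * Q).coeff (k+2)
      = Q.coeff k + b * Q.coeff (k+1) + c * Q.coeff (k+2) := by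
  rw [add_mul, add_mul, coeff_add, coeff_add, coeff_C_mul]
  have h1 : (X^2 * Q).coeff (k+2) = Q.coeff k := by
    simpa using Q.coeff_X_pow_mul 2 k
  have h2 : (C b * X * Q).coeff (k+2) = b * Q.coeff (k+1) := by
    rw [mul_assoc, coeff_C_mul, coeff_X_mul]
  rw [h1, h2]

lemma coeff_quad_mul_zero (b c : ℝ) (Q : ℝ[X]) :
    ((X^2 + C b * X + C c) * Q).coeff 0 = c * Q.coeff 0 := by
  rw [mul_coeff_zero, coeff_add, coeff_add, coeff_C_zero]
  simp

lemma coeff_quad_mul_one (b c : ℝ) (Q : ℝ[X]) :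
    ((X^2 + C b * X + C c) * Q).coeff 1 = b * Q.coeff 0 + c * Q.coeff 1 := by
  rw [add_mul, add_mul, coeff_add, coeff_add, coeff_C_mul]
  have h1 : (X^2 * Q).coeff 1 = 0 := by
    have : (X^2 * Q) = X * (X * Q) := by ring
    rw [this]
    have : (X * (X * Q)).coeff (0+1) = (X * Q).coeff 0 := coeff_X_mul _ _
    rw [show (1:ℕ) = 0 + 1 from rfl, this, mul_coeff_zero, coeff_X_zero, zero_mul]
  have h2 : (C b * X * Q).coeff 1 = b * Q.coeff 0 := by
    rw [mul_assoc, coeff_C_mul]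
    rw [show (1:ℕ) = 0 + 1 from rfl, coeff_X_mul]
  rw [h1, h2, zero_add]

lemma monic_quad (b c : ℝ) : (X^2 + C b * X + C c).Monic := by
  have h : (X^2 + C b * X + C c) = X^(1+1) + (C b * X + C c) := by ring
  rw [h]
  refine monic_X_pow_add (lt_of_le_of_lt degree_linear_le ?_)
  exact_mod_cast Nat.one_lt_two

/-- Key inductive lemma: for a conjugate-closed multiset in the sector
`{re ≥ 0, |im| ≤ re}`, the product `∏ (X + z)` comes from a real polynomial
whose coefficients are nonnegative and satisfy `cₖ ≤ B c_{k+1}` where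
`B` is the sum of real parts. -/
lemma exists_good (t : Multiset ℂ) :
    t.map (starRingEnd ℂ) = t → (∀ z ∈ t, 0 ≤ z.re ∧ |z.im| ≤ z.re) →
    ∃ Q : ℝ[X], Q.Monic ∧ Q.natDegree = Multiset.card t ∧ (∀ k, 0 ≤ Q.coeff k) ∧
      (∀ k < Multiset.card t, Q.coeff k ≤ (t.map Complex.re).sum * Q.coeff (k+1)) ∧
      Q.map (algebraMap ℝ ℂ) = (t.map (fun z => X + C z)).prod := by
  induction t using Multiset.strongInductionOn with
  | _ t ih =>
    intro hconj hsec
    rcases eq_or_ne t 0 with rfl | hne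
    · exact ⟨1, monic_one, by simp, fun k => by
        rw [Polynomial.coeff_one]; split <;> norm_num, by simp, by simp⟩
    obtain ⟨μ, hμ⟩ := Multiset.exists_mem_of_ne_zero hne
    have hsecμ := hsec μ hμ
    by_cases him : μ.im = 0
    · -- real element
      set t' := t.erase μ with ht'def
      have ht : t = μ ::ₘ t' := (Multiset.cons_erase hμ).symm
      have ht'lt : t' < t := by rw [ht]; exact Multiset.lt_cons_self _ _
      have hconjμ : (starRingEnd ℂ) μ = μ := Complex.conj_eq_iff_im.mpr him
      have hconj' : t'.map (starRingEnd ℂ) = t' := by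
        have := hconj
        rw [ht, Multiset.map_cons, hconjμ] at this
        exact (Multiset.cons_inj_right μ).mp this
      have hsec' : ∀ z ∈ t', 0 ≤ z.re ∧ |z.im| ≤ z.re := fun z hz =>
        hsec z (by rw [ht]; exact Multiset.mem_cons_of_mem hz)
      obtain ⟨Q, hQm, hQd, hQ0, hQinv, hQmap⟩ := ih t' ht'lt hconj' hsec'
      set B := (t'.map Complex.re).sum with hBdef
      have hB : 0 ≤ B := Multiset.sum_nonneg (by
        intro x hx
        obtain ⟨z, hz, rfl⟩ := Multiset.mem_map.mp hx
        exact (hsec' z hz).1)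
      set p := μ.re with hpdef
      have hp : 0 ≤ p := hsecμ.1
      have hμp : μ = (p : ℂ) := Complex.ext (by simp [hpdef]) (by simp [him])
      refine ⟨(X + C p) * Q, (monic_X_add_C p).mul hQm, ?_, ?_, ?_, ?_⟩
      · rw [(monic_X_add_C p).natDegree_mul hQm, natDegree_X_add_C, hQd, ht]
        simp only [Multiset.card_cons]; omega
      · intro k
        rcases k with _ | k
        · rw [coeff_lin_mul_zero]; exact mul_nonneg hp (hQ0 0)
        · rw [coeff_lin_mul_succ]
          exact add_nonneg (hQ0 k) (mul_nonneg hp (hQ0 (k+1)))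
      · intro k hk
        have hBsum : (t.map Complex.re).sum = p + B := by
          rw [ht, Multiset.map_cons, Multiset.sum_cons]
        rw [hBsum]
        have hcard : Multiset.card t = Multiset.card t' + 1 := by
          rw [ht]; simp only [Multiset.card_cons]
        rcases k with _ | k
        · rw [coeff_lin_mul_zero, coeff_lin_mul_succ]
          have h0 := hQ0 0; have h1 := hQ0 1
          nlinarith [mul_nonneg hB h0, mul_nonneg (mul_nonneg hp hp) h1,
            mul_nonneg hB (mul_nonneg hp h1)]
        · rw [coeff_lin_mul_succ, coeff_lin_mul_succ]
          have hiv := hQinv k (by omega)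
          have h1 := hQ0 (k+1); have h2 := hQ0 (k+2)
          nlinarith [mul_nonneg hp h1, mul_nonneg (mul_nonneg hp hp) h2,
            mul_nonneg hB (mul_nonneg hp h2)]
      · rw [Polynomial.map_mul, Polynomial.map_add, Polynomial.map_X, Polynomial.map_C,
          hQmap, ht, Multiset.map_cons, Multiset.prod_cons]
        congr 2
        rw [hμp]; rfl
    · -- complex element: pair with conjugate
      have hν : (starRingEnd ℂ) μ ∈ t := by
        rw [← hconj]
        exact Multiset.mem_map_of_mem _ hμ
      set ν := (starRingEnd ℂ) μ with hνdef
      have hνμ : ν ≠ μ := by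
        intro h
        exact him (Complex.conj_eq_iff_im.mp h)
      have hν' : ν ∈ t.erase μ := Multiset.mem_erase_of_ne hνμ |>.mpr hν
      set t'' := (t.erase μ).erase ν with ht''def
      have ht1 : t.erase μ = ν ::ₘ t'' := (Multiset.cons_erase hν').symm
      have ht : t = μ ::ₘ ν ::ₘ t'' := by
        conv_lhs => rw [← Multiset.cons_erase hμ, ← Multiset.cons_erase hν']
      have htlt : t'' < t := by
        rw [ht]
        calc t'' < ν ::ₘ t'' := Multiset.lt_cons_self _ _
        _ < μ ::ₘ ν ::ₘ t'' := Multiset.lt_cons_self _ _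
      have hconj'' : t''.map (starRingEnd ℂ) = t'' := by
        have h := hconj
        rw [ht, Multiset.map_cons, Multiset.map_cons] at h
        have hcν : (starRingEnd ℂ) ν = μ := Complex.conj_conj μ
        rw [hcν, Multiset.cons_swap] at h
        exact (Multiset.cons_inj_right ν).mp ((Multiset.cons_inj_right μ).mp h)
      have hsec'' : ∀ z ∈ t'', 0 ≤ z.re ∧ |z.im| ≤ z.re := fun z hz =>
        hsec z (by rw [ht]; exact Multiset.mem_cons_of_mem (Multiset.mem_cons_of_mem hz))
      obtain ⟨Q, hQm, hQd, hQ0, hQinv, hQmap⟩ := ih t'' htlt hconj'' hsec''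
      set B := (t''.map Complex.re).sum with hBdef
      have hB : 0 ≤ B := Multiset.sum_nonneg (by
        intro x hx
        obtain ⟨z, hz, rfl⟩ := Multiset.mem_map.mp hx
        exact (hsec'' z hz).1)
      set b := 2 * μ.re with hbdef
      set c := Complex.normSq μ with hcdef
      have hb : 0 ≤ b := by have := hsecμ.1; simp [hbdef]; linarith
      have hc : 0 ≤ c := Complex.normSq_nonneg μ
      have hcb : c ≤ b^2 := by
        have h1 : |μ.im| ≤ μ.re := by have := hsecμ; rcases this with ⟨h, h2⟩; exact h2
        have h2 : μ.im * μ.im ≤ μ.re * μ.re := by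
          have := abs_nonneg μ.im
          nlinarith [sq_abs μ.im]
        rw [hcdef, Complex.normSq_apply, hbdef]
        nlinarith
      refine ⟨(X^2 + C b * X + C c) * Q, (monic_quad b c).mul hQm, ?_, ?_, ?_, ?_⟩
      · rw [(monic_quad b c).natDegree_mul hQm, hQd, ht]
        have : (X^2 + C b * X + C c : ℝ[X]).natDegree = 2 := by
          have hd : (X^2 + C b * X + C c : ℝ[X]).degree = 2 := by
            rw [show (X^2 + C b * X + C c : ℝ[X]) = X^2 + (C b * X + C c) by ring]
            rw [degree_add_eq_left_of_degree_lt]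
            · exact degree_X_pow 2
            · rw [degree_X_pow]
              exact lt_of_le_of_lt degree_linear_le (by norm_num)
          exact natDegree_eq_of_degree_eq_some hd
        rw [this]
        simp only [Multiset.card_cons]; omega
      · intro k
        rcases k with _ | _ | k
        · rw [coeff_quad_mul_zero]; exact mul_nonneg hc (hQ0 0)
        · rw [coeff_quad_mul_one]
          exact add_nonneg (mul_nonneg hb (hQ0 0)) (mul_nonneg hc (hQ0 1))
        · rw [coeff_quad_mul_succ]
          exact add_nonneg (add_nonneg (hQ0 k) (mul_nonneg hb (hQ0 (k+1))))
            (mul_nonneg hc (hQ0 (k+2)))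
      · intro k hk
        have hBsum : (t.map Complex.re).sum = b + B := by
          rw [ht, Multiset.map_cons, Multiset.map_cons, Multiset.sum_cons, Multiset.sum_cons]
          have : ν.re = μ.re := Complex.conj_re μ
          rw [this, hbdef]; ring
        rw [hBsum]
        have hcard : Multiset.card t = Multiset.card t'' + 2 := by
          rw [ht]; simp only [Multiset.card_cons]
        rcases k with _ | _ | k
        · rw [coeff_quad_mul_zero, coeff_quad_mul_one]
          have h0 := hQ0 0; have h1 := hQ0 1
          nlinarith [mul_le_mul_of_nonneg_right hcb h0, mul_nonneg hb (mul_nonneg hc h1),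
            mul_nonneg hB (mul_nonneg hb h0), mul_nonneg hB (mul_nonneg hc h1)]
        · rw [coeff_quad_mul_one, coeff_quad_mul_succ]
          have h0 := hQ0 0; have h1 := hQ0 1; have h2 := hQ0 2
          nlinarith [mul_le_mul_of_nonneg_right hcb h1, mul_nonneg hb (mul_nonneg hc h2),
            mul_nonneg hB h0, mul_nonneg hB (mul_nonneg hb h1), mul_nonneg hB (mul_nonneg hc h2)]
        · rw [coeff_quad_mul_succ, coeff_quad_mul_succ]
          have hiv := hQinv k (by omega)
          have h1 := hQ0 (k+1); have h2 := hQ0 (k+2); have h3 := hQ0 (k+3)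
          nlinarith [mul_le_mul_of_nonneg_right hcb h2, mul_nonneg hb h1,
            mul_nonneg hb (mul_nonneg hc h3), mul_nonneg hB h1,
            mul_nonneg hB (mul_nonneg hb h2), mul_nonneg hB (mul_nonneg hc h3)]
      · have hbC : (algebraMap ℝ ℂ) b = μ + ν := by
          rw [hbdef, hνdef, Complex.add_conj]; rfl
        have hcC : (algebraMap ℝ ℂ) c = μ * ν := by
          rw [hcdef, hνdef, Complex.mul_conj]; rfl
        have hfac : ((X:ℂ[X])^2 + C ((algebraMap ℝ ℂ) b) * X + C ((algebraMap ℝ ℂ) c))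
            = (X + C μ) * (X + C ν) := by
          rw [hbC, hcC, C_add, C_mul]; ring
        rw [Polynomial.map_mul, Polynomial.map_add, Polynomial.map_add, Polynomial.map_pow,
          Polynomial.map_mul, Polynomial.map_X, Polynomial.map_C, Polynomial.map_C,
          hQmap, ht, Multiset.map_cons, Multiset.map_cons, Multiset.prod_cons,
          Multiset.prod_cons, hfac, mul_assoc]



/-- Characteristic matrix of a companion-type matrix, written directly. -/
noncomputable def compCharm (n : ℕ) (a : ℕ → ℝ) : Matrix (Fin n) (Fin n) ℝ[X] :=
  Matrix.of fun i j =>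
    (if (i:ℕ) = (j:ℕ) then (X:ℝ[X]) else 0) -
      (if (i:ℕ) + 1 = (j:ℕ) then 1 else if (i:ℕ) = n - 1 then C (a (n - (j:ℕ))) else 0)

lemma det_compCharm (a : ℕ → ℝ) : ∀ (n : ℕ),
    (compCharm (n+1) a).det = X^(n+1) - ∑ k ∈ Finset.range (n+1), C (a (k+1)) * X^(n-k) := by
  intro n
  induction n with
  | zero =>
    rw [Matrix.det_fin_one]
    simp only [compCharm, Matrix.of_apply]
    norm_num
  | succ n IH =>
    rw [show (n + 1 + 1) = (n+1).succ from rfl, Matrix.det_succ_column_zero]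
    rw [Fin.sum_univ_succ]
    have hA00 : compCharm (n+2) a 0 0 = X := by
      simp only [compCharm, Matrix.of_apply]
      norm_num
    have hminor0 : (compCharm (n+2) a).submatrix (Fin.succAbove 0) Fin.succ
        = compCharm (n+1) a := by
      ext i j
      simp only [Matrix.submatrix_apply, Fin.succAbove_zero, compCharm, Matrix.of_apply,
        Fin.val_succ]
      have h4 : n+2 - ((j:ℕ)+1) = n+1 - (j:ℕ) := by omega
      rw [h4]
      split_ifs <;> first | rfl | (exfalso; omega)
    have hrest : ∀ i : Fin (n+1), i ≠ Fin.last n →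
        (-1 : ℝ[X]) ^ ((i.succ : Fin (n+2)) : ℕ) * compCharm (n+2) a i.succ 0 *
          ((compCharm (n+2) a).submatrix (Fin.succAbove i.succ) Fin.succ).det = 0 := by
      intro i hi
      have hval : ((i:ℕ)) ≠ n := fun h => hi (Fin.ext h)
      have hz : compCharm (n+2) a i.succ 0 = 0 := by
        simp only [compCharm, Matrix.of_apply, Fin.val_succ, Fin.val_zero]
        split_ifs <;> first | (exfalso; omega) | simp_all | norm_num
      rw [hz, mul_zero, zero_mul]
    have hsum2 : ∑ i : Fin (n+1),
        (-1 : ℝ[X]) ^ ((i.succ : Fin (n+2)) : ℕ) * compCharm (n+2) a i.succ 0 *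
          ((compCharm (n+2) a).submatrix (Fin.succAbove i.succ) Fin.succ).det
        = - C (a (n+2)) := by
      rw [Finset.sum_eq_single (Fin.last n)]
      · have hv : compCharm (n+2) a (Fin.last n).succ 0 = - C (a (n+2)) := by
          simp only [compCharm, Matrix.of_apply, Fin.val_succ, Fin.val_zero, Fin.val_last]
          split_ifs <;> first | (exfalso; omega) | norm_num | simp_all
        have hsucclast : (Fin.last n).succ = Fin.last (n+1) := by
          ext; simp
        have hminor : ((compCharm (n+2) a).submatrix (Fin.succAbove (Fin.last n).succ)
            Fin.succ).det = (-1 : ℝ[X])^(n+1) := by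
          rw [hsucclast]
          have hM : ∀ i j : Fin (n+1),
              (compCharm (n+2) a).submatrix (Fin.succAbove (Fin.last (n+1))) Fin.succ i j
              = (if (i:ℕ) = (j:ℕ)+1 then (X:ℝ[X]) else 0) - (if (i:ℕ) = (j:ℕ) then 1 else 0) := by
            intro i j
            have hib := i.isLt
            simp only [Matrix.submatrix_apply, Fin.succAbove_last, compCharm, Matrix.of_apply,
              Fin.val_succ, Fin.coe_castSucc]
            split_ifs <;> first | rfl | (exfalso; omega)
          have hlow : ((compCharm (n+2) a).submatrix (Fin.succAbove (Fin.last (n+1)))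
              Fin.succ).BlockTriangular OrderDual.toDual := by
            intro i j hij
            rw [hM i j]
            have hij' : (i:ℕ) < (j:ℕ) := hij
            have h1 : ¬ ((i:ℕ) = (j:ℕ)+1) := by omega
            have h2 : ¬ ((i:ℕ) = (j:ℕ)) := by omega
            rw [if_neg h1, if_neg h2, sub_zero]
          rw [Matrix.det_of_lowerTriangular _ hlow]
          have hdiag : ∀ i : Fin (n+1), (compCharm (n+2) a).submatrix
              (Fin.succAbove (Fin.last (n+1))) Fin.succ i i = -1 := by
            intro i
            rw [hM i i]
            simp
          rw [Finset.prod_congr rfl (fun i _ => hdiag i)]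
          simp
        have hcoe : (((Fin.last n).succ : Fin (n+2)) : ℕ) = n+1 := by simp
        rw [hcoe, hv, hminor]
        have h1 : ((-1:ℝ[X]))^(n+1) * ((-1:ℝ[X]))^(n+1) = 1 := by
          rw [← pow_add]
          exact Even.neg_one_pow ⟨n+1, by ring⟩
        calc (-1:ℝ[X])^(n+1) * (-C (a (n+2))) * (-1)^(n+1)
            = ((-1:ℝ[X])^(n+1) * (-1)^(n+1)) * (-C (a (n+2))) := by ring
          _ = - C (a (n+2)) := by rw [h1]; ring
      · intro i _ hi
        exact hrest i hi
      · intro h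
        exact absurd (Finset.mem_univ _) h
    rw [hA00, hminor0, IH, hsum2]
    simp only [Fin.val_zero, pow_zero, one_mul]
    rw [mul_sub, Finset.mul_sum]
    have hterm : ∀ k ∈ Finset.range (n+1),
        X * (C (a (k+1)) * X^(n-k)) = C (a (k+1)) * X^(n+1-k) := by
      intro k hk
      have hk' : k ≤ n := Nat.lt_succ_iff.mp (Finset.mem_range.mp hk)
      rw [show n+1-k = (n-k)+1 by omega, pow_succ]
      ring
    rw [Finset.sum_congr rfl hterm]
    conv_rhs => rw [Finset.sum_range_succ]
    have hz : n+1-(n+1) = 0 := by omega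
    rw [hz, pow_zero, mul_one]
    simp only [Nat.succ_eq_add_one]
    ring

end SulAux

/-- Realizability of Suleimanova-type lists: if `λ₁` is real, `∑ λᵢ ≥ 0`, the list is
closed under conjugation, and `Re λᵢ ≤ 0`, `|Re λᵢ| ≥ |Im λᵢ|` for `i ≥ 2`, then there
is an entrywise nonnegative matrix with constant row sums `λ₁` and spectrum
`{λ₁, …, λₙ}`. -/
theorem suleimanova_realizable {n : ℕ} (hn : 0 < n) (lam : Fin n → ℂ)
    (hreal : (lam ⟨0, hn⟩).im = 0)
    (hsum : 0 ≤ (∑ i, lam i).re)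
    (hconj : (Finset.univ.val.map lam).map (starRingEnd ℂ) = Finset.univ.val.map lam)
    (hF : ∀ i : Fin n, i ≠ ⟨0, hn⟩ →
      (lam i).re ≤ 0 ∧ |(lam i).im| ≤ |(lam i).re|) :
    ∃ A : Matrix (Fin n) (Fin n) ℝ,
      (∀ i j, 0 ≤ A i j) ∧
      (A.mulVec (fun _ => 1) = fun _ => (lam ⟨0, hn⟩).re) ∧
      A.charpoly.map (algebraMap ℝ ℂ) = ∏ i, (X - C (lam i)) := by
  classical
  set i0 : Fin n := ⟨0, hn⟩ with hi0
  set L : ℝ := (lam i0).re with hLdef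
  set s' : Multiset ℂ := ((Finset.univ.erase i0).val.map lam) with hs'def
  have huniv : (Finset.univ : Finset (Fin n)).val = i0 ::ₘ (Finset.univ.erase i0).val := by
    rw [Finset.erase_val]
    exact (Multiset.cons_erase (Finset.mem_val.mpr (Finset.mem_univ i0))).symm
  have hs : Finset.univ.val.map lam = lam i0 ::ₘ s' := by rw [huniv, Multiset.map_cons]
  have hconjlam0 : (starRingEnd ℂ) (lam i0) = lam i0 := Complex.conj_eq_iff_im.mpr hreal
  have hconjs' : s'.map (starRingEnd ℂ) = s' := by
    rw [hs, Multiset.map_cons, hconjlam0] at hconj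
    exact (Multiset.cons_inj_right _).mp hconj
  set t : Multiset ℂ := s'.map (fun z => -z) with htdef
  have hconjt : t.map (starRingEnd ℂ) = t := by
    rw [htdef, Multiset.map_map]
    have hcomp : ((starRingEnd ℂ) ∘ (fun z : ℂ => -z)) = (fun z : ℂ => -z) ∘ (starRingEnd ℂ) := by
      funext z; simp
    rw [hcomp, ← Multiset.map_map, hconjs']
  have hsect : ∀ z ∈ t, 0 ≤ z.re ∧ |z.im| ≤ z.re := by
    intro z hz
    obtain ⟨w, hw, rfl⟩ := Multiset.mem_map.mp hz
    obtain ⟨i, hi, rfl⟩ := Multiset.mem_map.mp hw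
    have hine : i ≠ i0 := Finset.ne_of_mem_erase (Finset.mem_val.mp hi)
    obtain ⟨h1, h2⟩ := hF i hine
    rw [abs_of_nonpos h1] at h2
    constructor
    · rw [Complex.neg_re]; linarith
    · rw [Complex.neg_re, Complex.neg_im, abs_neg]; linarith
  have hcardt : Multiset.card t = n - 1 := by
    rw [htdef, Multiset.card_map, hs'def, Multiset.card_map]
    have : Multiset.card (Finset.univ.erase i0).val = (Finset.univ.erase i0).card := rfl
    rw [this, Finset.card_erase_of_mem (Finset.mem_univ i0), Finset.card_univ, Fintype.card_fin]
  obtain ⟨Q, hQm, hQd, hQ0, hQinv, hQmap⟩ := SulAux.exists_good t hconjt hsect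
  set B : ℝ := (t.map Complex.re).sum with hBdef
  have hB0 : 0 ≤ B := Multiset.sum_nonneg (by
    intro x hx
    obtain ⟨z, hz, rfl⟩ := Multiset.mem_map.mp hx
    exact (hsect z hz).1)
  have hre_erase : ∑ i ∈ Finset.univ.erase i0, (lam i).re = -B := by
    rw [hBdef, htdef, Multiset.map_map]
    have h1 : (Complex.re ∘ fun z : ℂ => -z) = fun z : ℂ => -(Complex.re z) := by
      funext z; simp
    rw [h1]
    have h2 : ∑ i ∈ Finset.univ.erase i0, (lam i).re
        = (s'.map Complex.re).sum := by
      rw [hs'def, Multiset.map_map]; rfl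
    rw [h2]
    have h3 : (fun z : ℂ => -(Complex.re z)) = (fun x : ℝ => -x) ∘ Complex.re := rfl
    rw [h3, ← Multiset.map_map, Multiset.sum_map_neg']
    simp
  have hsum' : 0 ≤ L + ∑ i ∈ Finset.univ.erase i0, (lam i).re := by
    have h1 : (∑ i, lam i).re = ∑ i, (lam i).re := Complex.re_sum _ lam
    have h2 : ∑ i, (lam i).re = (lam i0).re + ∑ i ∈ Finset.univ.erase i0, (lam i).re :=
      (Finset.add_sum_erase _ _ (Finset.mem_univ i0)).symm
    rw [h1, h2] at hsum
    exact hsum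
  have hBL : B ≤ L := by rw [hre_erase] at hsum'; linarith
  have hL0 : 0 ≤ L := le_trans hB0 hBL
  set f : ℝ[X] := (X - C L) * Q with hf
  have hfm : f.Monic := (monic_X_sub_C L).mul hQm
  have hfd : f.natDegree = n := by
    rw [hf, (monic_X_sub_C L).natDegree_mul hQm, natDegree_X_sub_C, hQd, hcardt]; omega
  have hprod : ∏ i, (X - C (lam i)) = f.map (algebraMap ℝ ℂ) := by
    have h1 : ∏ i, (X - C (lam i)) = ((Finset.univ.val.map lam).map (fun z => X - C z)).prod := by
      rw [Finset.prod_eq_multiset_prod, Multiset.map_map]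
      rfl
    have hlam0 : lam i0 = ((L : ℝ) : ℂ) := Complex.ext (by simp [hLdef]) (by simp [hreal])
    rw [h1, hs, Multiset.map_cons, Multiset.prod_cons]
    have h2 : ∀ u : Multiset ℂ, (Multiset.map (fun z : ℂ => -z) u).map (fun z => X + C z)
        = u.map (fun z => X - C z) := by
      intro u
      rw [Multiset.map_map]
      apply Multiset.map_congr rfl
      intro z _
      simp only [Function.comp_apply, map_neg]
      ring
    rw [← h2 s', ← htdef, ← hQmap, hf, Polynomial.map_mul, Polynomial.map_sub, Polynomial.map_X,
      Polynomial.map_C, hlam0]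
    norm_num [Complex.coe_algebraMap]
  have hcoeff : ∀ j, j < n → f.coeff j ≤ 0 := by
    intro j hj
    have hf' : f = (X + C (-L)) * Q := by rw [hf, map_neg, sub_eq_add_neg]
    rcases j with _ | j
    · rw [hf', SulAux.coeff_lin_mul_zero]
      have := hQ0 0; nlinarith
    · rw [hf', SulAux.coeff_lin_mul_succ]
      have hiv := hQinv j (by rw [hcardt]; omega)
      have h1 := hQ0 (j+1)
      have h2 : B * Q.coeff (j+1) ≤ L * Q.coeff (j+1) := mul_le_mul_of_nonneg_right hBL h1
      linarith
  by_cases hL : L = 0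
  · have hle : ∀ i ∈ Finset.univ.erase i0, (lam i).re ≤ 0 :=
      fun i hi => (hF i (Finset.ne_of_mem_erase hi)).1
    have hge : 0 ≤ ∑ i ∈ Finset.univ.erase i0, (lam i).re := by rw [hL] at hsum'; linarith
    have hzz : ∀ i ∈ Finset.univ.erase i0, (lam i).re = 0 :=
      (Finset.sum_eq_zero_iff_of_nonpos hle).mp (le_antisymm (Finset.sum_nonpos hle) hge)
    have hall : ∀ i, lam i = 0 := by
      intro i
      by_cases hii : i = i0
      · subst hii
        exact Complex.ext (by rw [← hLdef, hL]; simp) (by rw [hreal]; simp)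
      · have hre0 : (lam i).re = 0 := hzz i (Finset.mem_erase.mpr ⟨hii, Finset.mem_univ i⟩)
        have him0 : (lam i).im = 0 := by
          have h2 := (hF i hii).2
          rw [hre0, abs_zero] at h2
          exact abs_eq_zero.mp (le_antisymm h2 (abs_nonneg _))
        exact Complex.ext hre0 him0
    refine ⟨0, fun i j => le_refl 0, ?_, ?_⟩
    · funext i
      rw [Matrix.zero_mulVec]
      simp only [Pi.zero_apply]
      exact hL.symm
    · have hchar : (0 : Matrix (Fin n) (Fin n) ℝ).charpoly = X^n := by
        rw [Matrix.charpoly]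
        have hc : charmatrix (0 : Matrix (Fin n) (Fin n) ℝ)
            = Matrix.diagonal (fun _ : Fin n => (X:ℝ[X])) := by
          rw [charmatrix]
          simp [Matrix.scalar]
        rw [hc, Matrix.det_diagonal, Finset.prod_const, Finset.card_univ, Fintype.card_fin]
      rw [hchar, Polynomial.map_pow, Polynomial.map_X]
      have hx : ∀ i ∈ Finset.univ, (X - C (lam i) : ℂ[X]) = X := by
        intro i _
        rw [hall i]
        simp
      rw [Finset.prod_congr rfl hx, Finset.prod_const, Finset.card_univ, Fintype.card_fin]
  · have hLpos : 0 < L := lt_of_le_of_ne hL0 (Ne.symm hL)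
    set a : ℕ → ℝ := fun k => -(f.coeff (n - k)) with hadef
    have ha_nonneg : ∀ k, 1 ≤ k → 0 ≤ a k := by
      intro k hk
      rw [hadef]
      simp only
      have h1 : n - k < n := by omega
      linarith [hcoeff (n-k) h1]
    obtain ⟨m, hm⟩ : ∃ m, n = m + 1 := ⟨n - 1, by omega⟩
    have hrepr : X^n - ∑ k ∈ Finset.range n, C (a (k+1)) * X^(m - k) = f := by
      have hstep : ∀ k ∈ Finset.range n, C (a (k+1)) * X^(m-k)
          = -(C (f.coeff (m-k)) * X^(m-k)) := by
        intro k _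
        have h1 : a (k+1) = -(f.coeff (m-k)) := by
          rw [hadef]
          simp only
          congr 2
          omega
        rw [h1, map_neg, neg_mul]
      rw [Finset.sum_congr rfl hstep]
      rw [Finset.sum_neg_distrib, sub_neg_eq_add]
      have hreflect : ∑ k ∈ Finset.range n, C (f.coeff (m-k)) * X^(m-k)
          = ∑ j ∈ Finset.range n, C (f.coeff j) * X^j := by
        rw [← Finset.sum_range_reflect (fun j => C (f.coeff j) * X^j) n]
        apply Finset.sum_congr rfl
        intro k hk
        have hkn := Finset.mem_range.mp hk
        have : n - 1 - k = m - k := by omega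
        rw [this]
      rw [hreflect, ← hfd]
      exact (hfm.as_sum).symm
    set A : Matrix (Fin n) (Fin n) ℝ := Matrix.of (fun i j =>
      if (i:ℕ)+1 = (j:ℕ) then L
      else if (i:ℕ) = n-1 then a (n - (j:ℕ)) * L^((j:ℕ)+1) / L^n else 0) with hAdef
    have hnonneg : ∀ i j, 0 ≤ A i j := by
      intro i j
      rw [hAdef]
      simp only [Matrix.of_apply]
      split_ifs with h1 h2
      · exact le_of_lt hLpos
      · have hj : (j:ℕ) < n := j.isLt
        have ha : 0 ≤ a (n - (j:ℕ)) := ha_nonneg _ (by omega)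
        exact div_nonneg (mul_nonneg ha (le_of_lt (pow_pos hLpos _)))
          (le_of_lt (pow_pos hLpos _))
      · exact le_refl 0
    have heval : ∑ k ∈ Finset.range n, a (k+1) * L^(m-k) = L^n := by
      have h0 : f.eval L = 0 := by rw [hf]; simp
      have h1 := congrArg (Polynomial.eval L) hrepr
      rw [h0, Polynomial.eval_sub, Polynomial.eval_pow, Polynomial.eval_X,
        Polynomial.eval_finset_sum] at h1
      have h2 : ∀ k ∈ Finset.range n, (C (a (k+1)) * X^(m-k)).eval L = a (k+1) * L^(m-k) := by
        intro k _
        rw [Polynomial.eval_mul, Polynomial.eval_C, Polynomial.eval_pow, Polynomial.eval_X]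
      rw [Finset.sum_congr rfl h2] at h1
      linarith
    have hrows : A.mulVec (fun _ => 1) = fun _ => L := by
      funext i
      show ∑ j, A i j * 1 = L
      simp only [mul_one]
      by_cases hi : (i:ℕ) = n-1
      · have hAe : ∀ j : Fin n, A i j = a (n - (j:ℕ)) * L^((j:ℕ)+1) / L^n := by
          intro j
          rw [hAdef]
          simp only [Matrix.of_apply]
          rw [if_neg (by have := j.isLt; omega), if_pos hi]
        rw [Finset.sum_congr rfl (fun j _ => hAe j), ← Finset.sum_div]
        have hfin : ∑ j : Fin n, a (n - (j:ℕ)) * L^((j:ℕ)+1)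
            = ∑ k ∈ Finset.range n, a (n - k) * L^(k+1) :=
          Fin.sum_univ_eq_sum_range (fun k => a (n-k) * L^(k+1)) n
        have hrefl : ∑ k ∈ Finset.range n, a (n-k) * L^(k+1)
            = ∑ k ∈ Finset.range n, a (k+1) * L^((m-k)+1) := by
          rw [← Finset.sum_range_reflect]
          apply Finset.sum_congr rfl
          intro k hk
          have hkn := Finset.mem_range.mp hk
          congr 2 <;> omega
        have hpull : ∑ k ∈ Finset.range n, a (k+1) * L^((m-k)+1)
            = (∑ k ∈ Finset.range n, a (k+1) * L^(m-k)) * L := by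
          rw [Finset.sum_mul]
          apply Finset.sum_congr rfl
          intro k _
          rw [pow_succ]
          ring
        rw [hfin, hrefl, hpull, heval]
        field_simp
      · have hin : (i:ℕ) + 1 < n := by have := i.isLt; omega
        have hAe : ∀ j : Fin n, A i j = if (⟨(i:ℕ)+1, hin⟩ : Fin n) = j then L else 0 := by
          intro j
          rw [hAdef]
          simp only [Matrix.of_apply]
          by_cases hj : (⟨(i:ℕ)+1, hin⟩ : Fin n) = j
          · rw [if_pos, if_pos hj]
            have := congrArg Fin.val hj
            simpa using this
          · rw [if_neg, if_neg hi, if_neg hj]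
            intro hc
            apply hj
            exact Fin.ext (by simpa using hc)
        rw [Finset.sum_congr rfl (fun j _ => hAe j), Finset.sum_ite_eq]
        simp
    have hcm : ∀ (M : Matrix (Fin n) (Fin n) ℝ) (i j : Fin n),
        charmatrix M i j = (if i = j then (X:ℝ[X]) else 0) - C (M i j) := by
      intro M i j
      rw [Matrix.charmatrix_apply, Matrix.diagonal_apply]
    have hD : Matrix.diagonal (fun i : Fin n => (C (L^(i:ℕ)) : ℝ[X])) * charmatrix A
        = SulAux.compCharm n a * Matrix.diagonal (fun i : Fin n => (C (L^(i:ℕ)) : ℝ[X])) := by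
      ext i j
      rw [Matrix.diagonal_mul, Matrix.mul_diagonal, hcm]
      rw [SulAux.compCharm]
      simp only [Matrix.of_apply]
      have hx : (C (L^(i:ℕ)) : ℝ[X]) * (if i = j then (X:ℝ[X]) else 0)
          = (if (i:ℕ) = (j:ℕ) then (X:ℝ[X]) else 0) * C (L^(j:ℕ)) := by
        by_cases hij : i = j
        · subst hij
          rw [if_pos rfl, if_pos rfl]
          ring
        · rw [if_neg hij, if_neg (fun h => hij (Fin.ext h))]
          simp
      have hy : (C (L^(i:ℕ)) : ℝ[X]) * C (A i j)
          = (if (i:ℕ)+1 = (j:ℕ) then (1:ℝ[X])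
            else if (i:ℕ) = n-1 then C (a (n - (j:ℕ))) else 0) * C (L^(j:ℕ)) := by
        rw [hAdef]
        simp only [Matrix.of_apply]
        split_ifs with h1 h2
        · rw [one_mul, ← C_mul]
          congr 1
          rw [← pow_succ]
          congr 1
        · rw [← C_mul, ← C_mul]
          congr 1
          have hpow : L^((i:ℕ)) * L^((j:ℕ)+1) = L^((j:ℕ)) * L^n := by
            rw [← pow_add, ← pow_add]
            congr 1
            omega
          field_simp
          linear_combination a (n-(j:ℕ)) * hpow
        · simp
      rw [mul_sub, sub_mul, hx, hy]
    have hdetD : (Matrix.diagonal (fun i : Fin n => (C (L^(i:ℕ)) : ℝ[X]))).det ≠ 0 := by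
      rw [Matrix.det_diagonal]
      apply Finset.prod_ne_zero_iff.mpr
      intro i _
      exact Polynomial.C_ne_zero.mpr (pow_ne_zero _ hL)
    have hchar : A.charpoly = f := by
      have h1 := congrArg Matrix.det hD
      rw [Matrix.det_mul, Matrix.det_mul] at h1
      have h2 : (charmatrix A).det = (SulAux.compCharm n a).det :=
        mul_left_cancel₀ hdetD (by rw [h1, mul_comm])
      have h4 := SulAux.det_compCharm a m
      rw [← hm] at h4
      rw [Matrix.charpoly, h2, h4, hrepr]
    exact ⟨A, hnonneg, hrows, by rw [hchar, ← hprod]⟩
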